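/- Let P = νX.∏_{i∈I}A_i be a 𝒯-compatible annotated π-term in normal form. Then for every trace ((x₁,t₁)…(x_k,t_k) A_j) in the forest Φ_𝒯(P) and every i ∈ {1,…,k}, the name x_i is tied to A_j in P. -/

import Mathlib

open Relation

namespace PiCalc

abbrev Name := ℕ

/-- Types over a forest `T` of base types: `τ ::= t | t[τ]`. -/
inductive Ty (T : Type) : Type where
  | base : T → Ty T
  | chan : T → Ty T → Ty T

def Ty.baseOf {T : Type} : Ty T → T
  | .base t => t
  | .chan t _ => t

/-- Annotated π-calculus processes with guarded replication. -/
inductive Proc (T : Type) : Type where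
  | nil  : Proc T
  | nu   : Name → Ty T → Proc T → Proc T
  | par  : Proc T → Proc T → Proc T
  | sum  : Proc T → Proc T → Proc T
  | inp  : Name → Name → Proc T → Proc T
  | out  : Name → Name → Proc T → Proc T
  | tau  : Proc T → Proc T
  | repl : Proc T → Proc T

namespace Proc

variable {T : Type}

/-- free names -/
def fn : Proc T → Finset Name
  | .nil => ∅
  | .nu x _ P => P.fn.erase x
  | .par P Q => P.fn ∪ Q.fn
  | .sum P Q => P.fn ∪ Q.fn
  | .inp a x P => insert a (P.fn.erase x)
  | .out a b P => insert a (insert b P.fn)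
  | .tau P => P.fn
  | .repl P => P.fn

/-- the list of all bound names (with multiplicity) -/
def bnList : Proc T → List Name
  | .nil => []
  | .nu x _ P => x :: P.bnList
  | .par P Q => P.bnList ++ Q.bnList
  | .sum P Q => P.bnList ++ Q.bnList
  | .inp _ x P => x :: P.bnList
  | .out _ _ P => P.bnList
  | .tau P => P.bnList
  | .repl P => P.bnList

/-- all restriction binders occurring in the term, with their annotations -/
def bnNuList : Proc T → List (Name × Ty T)
  | .nil => []
  | .nu x τ P => (x, τ) :: P.bnNuList
  | .par P Q => P.bnNuList ++ Q.bnNuList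
  | .sum P Q => P.bnNuList ++ Q.bnNuList
  | .inp _ _ P => P.bnNuList
  | .out _ _ P => P.bnNuList
  | .tau P => P.bnNuList
  | .repl P => P.bnNuList

/-- substitute `b` for the free occurrences of `a` -/
def subst : Proc T → Name → Name → Proc T
  | .nil, _, _ => .nil
  | .nu x τ P, a, b => if x = a then .nu x τ P else .nu x τ (P.subst a b)
  | .par P Q, a, b => .par (P.subst a b) (Q.subst a b)
  | .sum P Q, a, b => .sum (P.subst a b) (Q.subst a b)
  | .inp c x P, a, b =>
      .inp (if c = a then b else c) x (if x = a then P else P.subst a b)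
  | .out c d P, a, b =>
      .out (if c = a then b else c) (if d = a then b else d) (P.subst a b)
  | .tau P, a, b => .tau (P.subst a b)
  | .repl P, a, b => .repl (P.subst a b)

/-- simultaneous substitution of free names -/
def msubst (σ : Name → Name) : Proc T → Proc T
  | .nil => .nil
  | .nu x τ P => .nu x τ (P.msubst (Function.update σ x x))
  | .par P Q => .par (P.msubst σ) (Q.msubst σ)
  | .sum P Q => .sum (P.msubst σ) (Q.msubst σ)
  | .inp a x P => .inp (σ a) x (P.msubst (Function.update σ x x))
  | .out a b P => .out (σ a) (σ b) (P.msubst σ)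
  | .tau P => .tau (P.msubst σ)
  | .repl P => .repl (P.msubst σ)

/-- the active sequential subterms of a term -/
def activeSeq : Proc T → List (Proc T)
  | .nil => []
  | .nu _ _ P => P.activeSeq
  | .par P Q => P.activeSeq ++ Q.activeSeq
  | P => [P]

/-- the derivatives: all sequential subterms, active or not -/
def der : Proc T → List (Proc T)
  | .nil => []
  | .nu _ _ P => P.der
  | .par P Q => P.der ++ Q.der
  | .sum M M' => .sum M M' :: (M.der ++ M'.der)
  | .inp a x P => .inp a x P :: P.der
  | .out a b P => .out a b P :: P.der
  | .tau P => .tau P :: P.der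
  | .repl M => .repl M :: M.der

end Proc

/-- Structural congruence. -/
inductive Cong {T : Type} : Proc T → Proc T → Prop where
  | refl (P : Proc T) : Cong P P
  | symm : Cong P Q → Cong Q P
  | trans : Cong P Q → Cong Q R → Cong P R
  | nu_congr (x : Name) (τ : Ty T) : Cong P Q → Cong (.nu x τ P) (.nu x τ Q)
  | par_congr : Cong P P' → Cong Q Q' → Cong (.par P Q) (.par P' Q')
  | sum_congr : Cong P P' → Cong Q Q' → Cong (.sum P Q) (.sum P' Q')
  | inp_congr (a x : Name) : Cong P Q → Cong (.inp a x P) (.inp a x Q)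
  | out_congr (a b : Name) : Cong P Q → Cong (.out a b P) (.out a b Q)
  | tau_congr : Cong P Q → Cong (.tau P) (.tau Q)
  | repl_congr : Cong P Q → Cong (.repl P) (.repl Q)
  | alpha_nu (x y : Name) (τ : Ty T) (P : Proc T) :
      y ∉ P.fn → y ∉ P.bnList → Cong (.nu x τ P) (.nu y τ (P.subst x y))
  | alpha_inp (a x y : Name) (P : Proc T) :
      y ∉ P.fn → y ∉ P.bnList → Cong (.inp a x P) (.inp a y (P.subst x y))
  | par_comm (P Q : Proc T) : Cong (.par P Q) (.par Q P)
  | par_assoc (P Q R : Proc T) : Cong (.par (.par P Q) R) (.par P (.par Q R))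
  | par_nil (P : Proc T) : Cong (.par P .nil) P
  | sum_comm (P Q : Proc T) : Cong (.sum P Q) (.sum Q P)
  | sum_assoc (P Q R : Proc T) : Cong (.sum (.sum P Q) R) (.sum P (.sum Q R))
  | sum_nil (P : Proc T) : Cong (.sum P .nil) P
  | nu_nil (x : Name) (τ : Ty T) : Cong (.nu x τ .nil) .nil
  | nu_swap (x y : Name) (τ σ : Ty T) (P : Proc T) :
      Cong (.nu x τ (.nu y σ P)) (.nu y σ (.nu x τ P))
  | repl_nil : Cong (.repl .nil) (.nil : Proc T)
  | repl_unfold (M : Proc T) : Cong (.repl M) (.par M (.repl M))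
  | extrude (x : Name) (τ : Ty T) (P Q : Proc T) :
      x ∉ P.fn → Cong (.par P (.nu x τ Q)) (.nu x τ (.par P Q))

/-- α-congruence: the congruence generated by α-conversion only. -/
inductive Alpha {T : Type} : Proc T → Proc T → Prop where
  | refl (P : Proc T) : Alpha P P
  | symm : Alpha P Q → Alpha Q P
  | trans : Alpha P Q → Alpha Q R → Alpha P R
  | nu_congr (x : Name) (τ : Ty T) : Alpha P Q → Alpha (.nu x τ P) (.nu x τ Q)
  | par_congr : Alpha P P' → Alpha Q Q' → Alpha (.par P Q) (.par P' Q')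
  | sum_congr : Alpha P P' → Alpha Q Q' → Alpha (.sum P Q) (.sum P' Q')
  | inp_congr (a x : Name) : Alpha P Q → Alpha (.inp a x P) (.inp a x Q)
  | out_congr (a b : Name) : Alpha P Q → Alpha (.out a b P) (.out a b Q)
  | tau_congr : Alpha P Q → Alpha (.tau P) (.tau Q)
  | repl_congr : Alpha P Q → Alpha (.repl P) (.repl Q)
  | alpha_nu (x y : Name) (τ : Ty T) (P : Proc T) :
      y ∉ P.fn → y ∉ P.bnList → Alpha (.nu x τ P) (.nu y τ (P.subst x y))
  | alpha_inp (a x y : Name) (P : Proc T) :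
      y ∉ P.fn → y ∉ P.bnList → Alpha (.inp a x P) (.inp a y (P.subst x y))

mutual
  /-- choices in normal form: sums of prefixed normal forms -/
  inductive NFChoice {T : Type} : Proc T → Prop where
    | inp : NF P → NFChoice (.inp a x P)
    | out : NF P → NFChoice (.out a b P)
    | tau : NF P → NFChoice (.tau P)
    | sum : NFChoice M → NFChoice M' → NFChoice (.sum M M')

  /-- parallel compositions of normal-form sequential terms -/
  inductive NFPar {T : Type} : Proc T → Prop where
    | choice : NFChoice A → NFPar A
    | repl : NFChoice A → NFPar (.repl A)
    | par : NFPar P → NFPar Q → NFPar (.par P Q)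

  /-- normal forms: ν x₁ … ν xₙ . (A₁ ‖ … ‖ A_m) -/
  inductive NF {T : Type} : Proc T → Prop where
    | nil : NF (.nil : Proc T)
    | par : NFPar P → NF P
    | nu (x : Name) (τ : Ty T) : NF P → P ≠ .nil → NF (.nu x τ P)
end

/-- name uniqueness: every name bound at most once, free and bound names disjoint -/
def NameUniq {T : Type} (P : Proc T) : Prop :=
  P.bnList.Nodup ∧ ∀ x ∈ P.bnList, x ∉ P.fn

/-- normal forms are assumed (wlog) to satisfy name uniqueness -/
def NormalForm {T : Type} (P : Proc T) : Prop := NF P ∧ NameUniq P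

/-- ν-prefixing by a list of annotated restrictions -/
def nuList {T : Type} (X : List (Name × Ty T)) (P : Proc T) : Proc T :=
  X.foldr (fun xτ Q => .nu xτ.1 xτ.2 Q) P

/-- parallel composition of a list of terms (`0` if empty) -/
def parList {T : Type} : List (Proc T) → Proc T
  | [] => .nil
  | [A] => A
  | A :: As => .par A (parList As)

/-- `A` occurs as a summand of the choice `M` -/
inductive Summand {T : Type} : Proc T → Proc T → Prop where
  | refl (A : Proc T) : Summand A A
  | left : Summand A M → Summand A (.sum M M')
  | right : Summand A M' → Summand A (.sum M M')

/-- Reduction semantics of the π-calculus (Definition 2.1). -/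
inductive Reduces {T : Type} : Proc T → Proc T → Prop where
  | comm (P Q S R : Proc T) (Cs : List (Proc T)) (W Ys Yr : List (Name × Ty T))
      (a b x : Name) (S' R' : Proc T) :
      Cong P (nuList W (parList (S :: R :: Cs))) →
      NormalForm (nuList W (parList (S :: R :: Cs))) →
      Summand (.out a b (nuList Ys S')) S →
      Summand (.inp a x (nuList Yr R')) R →
      Cong Q (nuList (W ++ Ys ++ Yr) (parList (S' :: R'.subst x b :: Cs))) →
      Reduces P Q
  | tauStep (P Q : Proc T) (Cs : List (Proc T)) (W Y : List (Name × Ty T)) (P' : Proc T) :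
      Cong P (nuList W (parList (.tau (nuList Y P') :: Cs))) →
      NormalForm (nuList W (parList (.tau (nuList Y P') :: Cs))) →
      Cong Q (nuList (W ++ Y) (parList (P' :: Cs))) →
      Reduces P Q

/-- reachable terms -/
def Reach {T : Type} (P : Proc T) : Set (Proc T) :=
  {Q | Relation.ReflTransGen Reduces P Q}

/-- nesting of restrictions -/
def nestNu {T : Type} : Proc T → ℕ
  | .nu _ _ P => nestNu P + 1
  | .par P Q => max (nestNu P) (nestNu Q)
  | _ => 0

/-- depth: the minimal nesting of restrictions in the congruence class -/
noncomputable def depth {T : Type} (P : Proc T) : ℕ :=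
  sInf {n | ∃ Q, Cong Q P ∧ nestNu Q = n}

def DepthBounded {T : Type} (P : Proc T) : Prop :=
  ∃ k, ∀ Q ∈ Reach P, depth Q ≤ k

/-! ## Labelled forests -/

inductive LTree (L : Type) : Type where
  | node : L → List (LTree L) → LTree L

abbrev LForest (L : Type) := List (LTree L)

/-- isomorphism of labelled trees -/
inductive TreeEquiv {L : Type} : LTree L → LTree L → Prop where
  | node (l : L) (cs cs' : List (LTree L)) (σ : Fin cs.length ≃ Fin cs'.length)
      (h : ∀ i, TreeEquiv (cs.get i) (cs'.get (σ i))) :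
      TreeEquiv (.node l cs) (.node l cs')

/-- isomorphism of labelled forests -/
def ForestEquiv {L : Type} (φ φ' : LForest L) : Prop :=
  ∃ σ : Fin φ.length ≃ Fin φ'.length, ∀ i, TreeEquiv (φ.get i) (φ'.get (σ i))

/-- paths starting at the root of a tree, as label sequences -/
inductive RootPath {L : Type} : LTree L → List L → Prop where
  | single (l : L) (cs : List (LTree L)) : RootPath (.node l cs) [l]
  | cons {t : LTree L} {p : List L} (l : L) (cs : List (LTree L)) :
      t ∈ cs → RootPath t p → RootPath (.node l cs) (l :: p)

/-- `Subtree s t`: `s` is a subtree of `t` -/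
inductive Subtree {L : Type} : LTree L → LTree L → Prop where
  | refl (t : LTree L) : Subtree t t
  | child {s t : LTree L} (l : L) (cs : List (LTree L)) :
      t ∈ cs → Subtree s t → Subtree s (.node l cs)

def InForest {L : Type} (φ : LForest L) (s : LTree L) : Prop :=
  ∃ t ∈ φ, Subtree s t

/-- traces of (arbitrary) paths of the forest -/
def IsTrace {L : Type} (φ : LForest L) (p : List L) : Prop :=
  ∃ s, InForest φ s ∧ RootPath s p

/-- traces of paths starting at a root of the forest -/
def IsRootTrace {L : Type} (φ : LForest L) (p : List L) : Prop :=
  ∃ t ∈ φ, RootPath t p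

/-- labels in the forest representation of annotated terms: `(x, base τ)` or a sequential term -/
abbrev FLabel (T : Type) := (Name × T) ⊕ Proc T

/-- the forest of an annotated term -/
def forestOf {T : Type} : Proc T → LForest (FLabel T)
  | .nil => []
  | .nu x τ P => [.node (.inl (x, τ.baseOf)) (forestOf P)]
  | .par P Q => forestOf P ++ forestOf Q
  | P => [.node (.inr P) []]

/-- the forest representation of the congruence class of `P` (up to isomorphism) -/
def Fsem {T : Type} (P : Proc T) : Set (LForest (FLabel T)) :=
  {φ | ∃ Q, Cong Q P ∧ ForestEquiv φ (forestOf Q)}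

/-- 𝒯-compatibility of a labelled forest w.r.t. the strict order `lt` on base types -/
def TCompatForest {T : Type} (lt : T → T → Prop) (φ : LForest (FLabel T)) : Prop :=
  ∀ (xs : List (Name × T)) (A : Proc T),
    IsTrace φ (xs.map Sum.inl ++ [Sum.inr A]) →
    (xs.map Prod.snd).Chain' lt

/-- a term is 𝒯-compatible if some forest in `Fsem P` is -/
def TCompat {T : Type} (lt : T → T → Prop) (P : Proc T) : Prop :=
  ∃ φ ∈ Fsem P, TCompatForest lt φ

inductive Subterm {T : Type} : Proc T → Proc T → Prop where
  | refl (P : Proc T) : Subterm P P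
  | nu (x : Name) (τ : Ty T) : Subterm S P → Subterm S (.nu x τ P)
  | par_left : Subterm S P → Subterm S (.par P Q)
  | par_right : Subterm S Q → Subterm S (.par P Q)
  | sum_left : Subterm S P → Subterm S (.sum P Q)
  | sum_right : Subterm S Q → Subterm S (.sum P Q)
  | inp (a x : Name) : Subterm S P → Subterm S (.inp a x P)
  | out (a b : Name) : Subterm S P → Subterm S (.out a b P)
  | tau : Subterm S P → Subterm S (.tau P)
  | repl : Subterm S P → Subterm S (.repl P)

/-- a term is 𝒯-shaped if all its subterms are 𝒯-compatible -/
def TShaped {T : Type} (lt : T → T → Prop) (P : Proc T) : Prop :=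
  ∀ S, Subterm S P → TCompat lt S

/-! ## The tied-to relation -/

def fnAt {T : Type} (As : List (Proc T)) (i : ℕ) : Finset Name := (As.getD i .nil).fn

def namesOf {T : Type} (X : List (Name × Ty T)) : List Name := X.map Prod.fst

/-- `A_i` is linked to `A_j` in `νX.∏ As` -/
def Linked {T : Type} (X : List (Name × Ty T)) (As : List (Proc T)) (i j : ℕ) : Prop :=
  i < As.length ∧ j < As.length ∧
  ∃ y, y ∈ fnAt As i ∧ y ∈ fnAt As j ∧ y ∈ namesOf X

/-- `A_i` is tied to `A_j` in `νX.∏ As` -/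
def Tied {T : Type} (X : List (Name × Ty T)) (As : List (Proc T)) : ℕ → ℕ → Prop :=
  Relation.TransGen (Linked X As)

/-- the name `y` is tied to `A_i` in `νX.∏ As` -/
def NameTied {T : Type} (X : List (Name × Ty T)) (As : List (Proc T))
    (y : Name) (i : ℕ) : Prop :=
  ∃ j, y ∈ fnAt As j ∧ Tied X As j i

/-! ## The forest of base types and the type system -/

/-- `step` is the parent relation of a forest -/
def IsForestRel {T : Type} (step : T → T → Prop) : Prop :=
  (∀ a b c, step a c → step b c → a = b) ∧ ∀ t, ¬ Relation.TransGen step t t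

/-- the strict order `<` on base types -/
def blt {T : Type} (step : T → T → Prop) : T → T → Prop := Relation.TransGen step

/-- the order `≤` on base types -/
def ble {T : Type} (step : T → T → Prop) : T → T → Prop := Relation.ReflTransGen step

def Env (T : Type) := Name → Option (Ty T)

def extendEnv {T : Type} (Γ : Env T) (X : List (Name × Ty T)) : Env T :=
  fun y => match X.find? (fun p => p.1 == y) with
    | some p => some p.2
    | none => Γ y

/-- The type system of Figure 4. -/
inductive Types {T : Type} (step : T → T → Prop) : Env T → Proc T → Prop where
  | par (Γ : Env T) (X : List (Name × Ty T)) (As : List (Proc T)) :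
      (∀ A ∈ As, Types step (extendEnv Γ X) A) →
      (∀ i, i < As.length → ∀ xτ ∈ X, NameTied X As xτ.1 i →
        ∀ y ∈ fnAt As i, ∀ τy, Γ y = some τy →
          blt step τy.baseOf xτ.2.baseOf) →
      Types step Γ (nuList X (parList As))
  | sum (Γ : Env T) : Types step Γ M → Types step Γ M' → Types step Γ (.sum M M')
  | repl (Γ : Env T) : Types step Γ A → Types step Γ (.repl A)
  | tau (Γ : Env T) : Types step Γ A → Types step Γ (.tau A)
  | out (Γ : Env T) (a b : Name) (ta : T) (τb : Ty T) (Q : Proc T) :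
      Γ a = some (.chan ta τb) → Γ b = some τb → Types step Γ Q →
      Types step Γ (.out a b Q)
  | inp (Γ : Env T) (a x : Name) (ta : T) (τx : Ty T)
      (X : List (Name × Ty T)) (As : List (Proc T)) :
      Γ a = some (.chan ta τx) →
      Types step (extendEnv Γ [(x, τx)]) (nuList X (parList As)) →
      (ble step τx.baseOf ta ∨
        (∀ i, i < As.length → NameTied X As x i →
          ∀ y ∈ fnAt As i, y ≠ a → ∀ τy, Γ y = some τy →
            blt step τy.baseOf ta)) →
      Types step Γ (.inp a x (nuList X (parList As)))

/-- `Γ` is `P`-safe -/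
def PSafe {T : Type} (step : T → T → Prop) (Γ : Env T) (P : Proc T) : Prop :=
  ∀ x ∈ P.fn, ∀ τx, Γ x = some τx →
    ∀ yτ ∈ P.bnNuList, blt step τx.baseOf yτ.2.baseOf

/-- typably hierarchical terms -/
def TypablyHierarchical {T : Type} (step : T → T → Prop) (P : Proc T) : Prop :=
  ∃ N, NormalForm N ∧ Cong N P ∧ TShaped (blt step) N ∧
    ∃ Γ : Env T, PSafe step Γ N ∧ Types step Γ N


/-! ## The function Φ of Figure 2 -/

open scoped Classical in
/-- the assignments in `X` whose base type is minimal w.r.t. `<` -/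
noncomputable def minT {T : Type} (step : T → T → Prop)
    (X : List (Name × Ty T)) : List (Name × Ty T) :=
  X.filter (fun xτ => decide (∀ yτ ∈ X, ¬ blt step yτ.2.baseOf xτ.2.baseOf))

open scoped Classical in
/-- fuelled version of the function Φ of Figure 2; with `fuel ≥ X.length`
(and 𝒯 a forest) the fuel never runs out -/
noncomputable def PhiAux {T : Type} (step : T → T → Prop) :
    ℕ → List (Name × Ty T) → List (Proc T) → LForest (FLabel T)
  | 0, _, As => As.map (fun A => .node (.inr A) [])
  | fuel+1, X, As =>
    if X.isEmpty then As.map (fun A => .node (.inr A) []) else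
      let m := minT step X
      let Ix : (Name × Ty T) → List ℕ := fun xτ =>
        (List.range As.length).filter (fun i => decide (NameTied X As xτ.1 i))
      let Yx : (Name × Ty T) → List (Name × Ty T) := fun xτ =>
        X.filter (fun yτ => decide ((∃ i ∈ Ix xτ, yτ.1 ∈ fnAt As i) ∧ yτ ∉ m))
      let R : List ℕ :=
        (List.range As.length).filter
          (fun i => decide (∀ xτ ∈ m, ¬ NameTied X As xτ.1 i))
      let Z : List (Name × Ty T) :=
        X.filter (fun yτ => decide (yτ ∉ m ∧ ∀ xτ ∈ m, yτ ∉ Yx xτ))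
      (m.map (fun xτ =>
        LTree.node (.inl (xτ.1, xτ.2.baseOf))
          (PhiAux step fuel (Yx xτ) ((Ix xτ).map (fun i => As.getD i .nil)))))
      ++ PhiAux step fuel Z (R.map (fun i => As.getD i .nil))

/-- the function `Φ_𝒯` of Figure 2, applied to `νX.∏ As` -/
noncomputable def Phi {T : Type} (step : T → T → Prop)
    (X : List (Name × Ty T)) (As : List (Proc T)) : LForest (FLabel T) :=
  PhiAux step X.length X As

/-! ## Miscellaneous helpers -/

/-- the labels of a tree -/
def treeLabels {L : Type} : LTree L → List L
  | .node l cs => l :: (cs.attach.map (fun t => treeLabels t.1)).flatten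
decreasing_by
  have := List.sizeOf_lt_of_mem t.2
  simp only [LTree.node.sizeOf_spec]
  omega

/-- the labels of a forest -/
def forestLabels {L : Type} (φ : LForest L) : List L := (φ.map treeLabels).flatten

/-- forest labels keeping the full type annotation on names -/
abbrev FLabelA (T : Type) := (Name × Ty T) ⊕ Proc T

/-- the forest of a term, keeping full annotations on name labels -/
def forestOfA {T : Type} : Proc T → LForest (FLabelA T)
  | .nil => []
  | .nu x τ P => [.node (.inl (x, τ)) (forestOfA P)]
  | .par P Q => forestOfA P ++ forestOfA Q
  | P => [.node (.inr P) []]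

/-- union of two (disjoint) environments -/
def envUnion {T : Type} (Γ Γ' : Env T) : Env T :=
  fun y => match Γ y with
    | some τ => some τ
    | none => Γ' y

/-- `Deriv_P` relative to the choice `χ` of one name per base type -/
def DerivSet {T : Type} (χ : T → Name) (P : Proc T) : Set (Proc T) :=
  {Q' | ∃ Q ∈ P.der, ∃ σ : Name → Name,
    (∀ y ∈ Q.fn, σ y ∈ Set.range χ ∪ (P.fn : Set Name)) ∧ Q' = Q.msubst σ}

/-! ## Nested data class memory automata and their π-calculus encoding -/

namespace NDCMA

/-- a transition of a nested data class memory automaton with states `Fin m`: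
`(src, tested, dst, written)` -/
structure Trans (m : ℕ) where
  src : Fin m
  tested : List (Option (Fin m))
  dst : Fin m
  written : List (Fin m)

/-- Class memory functions over the canonical nested dataset whose level-`i`
data values are the lists of naturals of length `i`, with `pred` taking
prefixes (`⊥` is `none`). -/
abbrev CMF (m : ℕ) := List ℕ → Option (Fin m)

/-- one step of the automaton -/
def AStep {m : ℕ} (δ : List (Trans m)) :
    (Fin m × CMF m) → (Fin m × CMF m) → Prop :=
  fun c c' => ∃ tr ∈ δ, ∃ d : List ℕ,
    d.length = tr.tested.length ∧
    c.1 = tr.src ∧ c'.1 = tr.dst ∧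
    (∀ j (hj : j < tr.tested.length), c.2 (d.take (j+1)) = tr.tested.get ⟨j, hj⟩) ∧
    (∀ j (hj : j < tr.written.length),
      c'.2 (d.take (j+1)) = some (tr.written.get ⟨j, hj⟩)) ∧
    (∀ l : List ℕ, (∀ j < tr.tested.length, l ≠ d.take (j+1)) → c'.2 l = c.2 l)

/-- the type of the payload-free channels -/
def TyU : Ty Unit := .chan () (.base ())

/-- the channel `c^i_q` -/
def ch {m : ℕ} (i : ℕ) (q : Fin m) : Name := 2 + Nat.pair i q.val

/-- payload-free input -/
def recv (c : Name) (P : Proc Unit) : Proc Unit := .inp c 0 P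

/-- payload-free output (with nil continuation) -/
def send (c : Name) : Proc Unit := .out c 1 .nil

/-- the restrictions `ν𝒞^i` -/
def Cset (m i : ℕ) : List (Name × Ty Unit) :=
  (List.finRange m).map (fun q => (ch i q, TyU))

/-- the transitions in `θ_j`: those testing exactly `j` non-fresh data values -/
def theta {m : ℕ} (δ : List (Trans m)) (j : ℕ) : List (Trans m) :=
  δ.filter (fun tr => (tr.tested.takeWhile Option.isSome).length == j)

/-- the term `A_tr`, parametric in the encoding `Pθ` of the lower levels -/
def Atr {m : ℕ} (Pθ : ℕ → Proc Unit) (tr : Trans m) : Proc Unit :=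
  let j := (tr.tested.takeWhile Option.isSome).length
  let i := tr.tested.length
  let testedQs : List (Fin m) := tr.tested.reduceOption
  let inputs : List Name :=
    ch 0 tr.src :: List.zipWith (fun k q => ch k q) (List.range' 1 j) testedQs
  let restr : List (Name × Ty Unit) :=
    ((List.range' (j+1) (i - j)).map (fun k => Cset m k)).flatten
  let outs : List (Proc Unit) :=
    send (ch 0 tr.dst) ::
      List.zipWith (fun k q => send (ch k q)) (List.range' 1 i) tr.written
  let conts : List (Proc Unit) := (List.range' (j+1) (i - j)).map Pθ
  inputs.foldr (fun c P => recv c P) (nuList restr (parList (outs ++ conts)))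

/-- the terms `P_{θ_j}` (with fuel; `fuel = ℓ+1` suffices for level-`ℓ` automata) -/
def Ptheta {m : ℕ} (δ : List (Trans m)) : ℕ → ℕ → Proc Unit
  | 0, _ => .nil
  | fuel+1, j =>
      parList ((theta δ j).map (fun tr => .repl (Atr (fun k => Ptheta δ fuel k) tr)))

/-- the π-term encoding `P⟦𝒜⟧` of a level-`ℓ` NDCMA -/
def encode {m : ℕ} (ℓ : ℕ) (δ : List (Trans m)) (q0 : Fin m) : Proc Unit :=
  nuList (Cset m 0) (parList [Ptheta δ (ℓ+1) 0, send (ch 0 q0)])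

/-- terms of the form `ν𝒞⁰.(c̄ ‖ P')` with `c ∈ 𝒞⁰` -/
def Zform (m : ℕ) (P : Proc Unit) : Prop :=
  ∃ (q : Fin m) (P' : Proc Unit),
    Cong P (nuList (Cset m 0) (.par (send (ch 0 q)) P'))

/-- the derived transition relation `⟹` -/
def DStep (m : ℕ) (P Q : Proc Unit) : Prop :=
  Zform m P ∧ Zform m Q ∧
  ∃ (n : ℕ) (R : ℕ → Proc Unit), R 0 = P ∧ R n = Q ∧ 1 ≤ n ∧
    (∀ k < n, Reduces (R k) (R (k+1))) ∧
    (∀ k, 0 < k → k < n → ¬ Zform m (R k))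

end NDCMA


open scoped Classical in
noncomputable def IxD {T : Type} (X : List (Name × Ty T)) (As : List (Proc T))
    (xτ : Name × Ty T) : List ℕ :=
  (List.range As.length).filter (fun i => decide (NameTied X As xτ.1 i))

open scoped Classical in
noncomputable def YxD {T : Type} (step : T → T → Prop) (X : List (Name × Ty T))
    (As : List (Proc T)) (xτ : Name × Ty T) : List (Name × Ty T) :=
  X.filter (fun yτ => decide ((∃ i ∈ IxD X As xτ, yτ.1 ∈ fnAt As i) ∧ yτ ∉ minT step X))

open scoped Classical in
noncomputable def RD {T : Type} (step : T → T → Prop) (X : List (Name × Ty T))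
    (As : List (Proc T)) : List ℕ :=
  (List.range As.length).filter (fun i => decide (∀ xτ ∈ minT step X, ¬ NameTied X As xτ.1 i))

open scoped Classical in
noncomputable def ZD {T : Type} (step : T → T → Prop) (X : List (Name × Ty T))
    (As : List (Proc T)) : List (Name × Ty T) :=
  X.filter (fun yτ => decide (yτ ∉ minT step X ∧ ∀ xτ ∈ minT step X, yτ ∉ YxD step X As xτ))

lemma phiAux_succ {T : Type} (step : T → T → Prop) (fuel : ℕ)
    (X : List (Name × Ty T)) (As : List (Proc T)) (h : ¬ X.isEmpty) :
    PhiAux step (fuel+1) X As =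
      ((minT step X).map (fun xτ =>
        LTree.node (.inl (xτ.1, xτ.2.baseOf))
          (PhiAux step fuel (YxD step X As xτ) ((IxD X As xτ).map (fun i => As.getD i .nil)))))
      ++ PhiAux step fuel (ZD step X As) ((RD step X As).map (fun i => As.getD i .nil)) := by
  rw [PhiAux]
  simp only [if_neg h]
  rfl

section Lemmas
variable {T : Type}

lemma linked_lift {X X' : List (Name × Ty T)} {As As' : List (Proc T)} {f : ℕ → ℕ}
    (hn : ∀ y ∈ namesOf X', y ∈ namesOf X)
    (hf : ∀ i, i < As'.length → f i < As.length ∧ As'.getD i .nil = As.getD (f i) .nil)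
    {a b : ℕ} (h : Linked X' As' a b) : Linked X As (f a) (f b) := by
  obtain ⟨ha, hb, y, hy1, hy2, hy3⟩ := h
  obtain ⟨ha1, ha2⟩ := hf a ha
  obtain ⟨hb1, hb2⟩ := hf b hb
  refine ⟨ha1, hb1, y, ?_, ?_, hn y hy3⟩
  · simp only [fnAt] at hy1 ⊢; rw [← ha2]; exact hy1
  · simp only [fnAt] at hy2 ⊢; rw [← hb2]; exact hy2

lemma tied_lift {X X' : List (Name × Ty T)} {As As' : List (Proc T)} {f : ℕ → ℕ}
    (hn : ∀ y ∈ namesOf X', y ∈ namesOf X)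
    (hf : ∀ i, i < As'.length → f i < As.length ∧ As'.getD i .nil = As.getD (f i) .nil)
    {a b : ℕ} (h : Tied X' As' a b) : Tied X As (f a) (f b) := by
  induction h with
  | single h => exact .single (linked_lift hn hf h)
  | tail _ h ih => exact ih.tail (linked_lift hn hf h)

lemma tied_lt_left {X : List (Name × Ty T)} {As : List (Proc T)} {a b : ℕ}
    (h : Tied X As a b) : a < As.length := by
  induction h with
  | single h => exact h.1
  | tail _ _ ih => exact ih

lemma nameTied_lift {X X' : List (Name × Ty T)} {As As' : List (Proc T)} {f : ℕ → ℕ}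
    (hn : ∀ y ∈ namesOf X', y ∈ namesOf X)
    (hf : ∀ i, i < As'.length → f i < As.length ∧ As'.getD i .nil = As.getD (f i) .nil)
    {y : Name} {i : ℕ} (h : NameTied X' As' y i) : NameTied X As y (f i) := by
  obtain ⟨j, hj1, hj2⟩ := h
  refine ⟨f j, ?_, tied_lift hn hf hj2⟩
  have hjl := tied_lt_left hj2
  have h2 := (hf j hjl).2
  simp only [fnAt] at hj1 ⊢
  rw [← h2]; exact hj1

lemma namesOf_filter_subset {X : List (Name × Ty T)} (q : Name × Ty T → Bool) :
    ∀ y ∈ namesOf (X.filter q), y ∈ namesOf X := by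
  intro y hy
  obtain ⟨p, hp, rfl⟩ := List.mem_map.1 hy
  exact List.mem_map.2 ⟨p, (List.mem_filter.1 hp).1, rfl⟩

lemma subtree_node_cases {L : Type} {s : LTree L} {l : L} {cs : List (LTree L)}
    (h : Subtree s (.node l cs)) : s = .node l cs ∨ ∃ c ∈ cs, Subtree s c := by
  cases h with
  | refl => exact Or.inl rfl
  | child _ _ hmem hsub => exact Or.inr ⟨_, hmem, hsub⟩

lemma rootPath_node_cases {L : Type} {l : L} {cs : List (LTree L)} {p : List L}
    (h : RootPath (.node l cs) p) :
    p = [l] ∨ ∃ c ∈ cs, ∃ p', p = l :: p' ∧ RootPath c p' := by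
  cases h with
  | single => exact Or.inl rfl
  | cons _ _ hmem hp => exact Or.inr ⟨_, hmem, _, rfl, hp⟩

lemma trace_leaves {L : Type} (l : List (Proc T)) (xs : List (Name × T)) (A : Proc T)
    (h : IsTrace (l.map fun B => LTree.node (Sum.inr B) ([] : List (LTree (FLabel T))))
      (xs.map Sum.inl ++ [Sum.inr A])) : xs = [] ∧ A ∈ l := by
  obtain ⟨s, ⟨t, ht, hsub⟩, hpath⟩ := h
  obtain ⟨B, hB, rfl⟩ := List.mem_map.1 ht
  have hs : s = LTree.node (Sum.inr B) [] := by
    cases hsub with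
    | refl => rfl
    | child l cs hmem _ => exact absurd hmem List.not_mem_nil
  subst hs
  have hp : xs.map Sum.inl ++ [Sum.inr A] = [Sum.inr B] := by
    rcases rootPath_node_cases hpath with h | ⟨c, hc, _⟩
    · exact h
    · exact absurd hc List.not_mem_nil
  cases xs with
  | nil =>
    simp at hp
    exact ⟨rfl, hp ▸ hB⟩
  | cons a as => simp at hp

lemma exists_getD_of_mem {A : Proc T} {l : List (Proc T)} (h : A ∈ l) :
    ∃ i, i < l.length ∧ l.getD i .nil = A := by
  obtain ⟨i, hi, rfl⟩ := List.getElem_of_mem h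
  exact ⟨i, hi, List.getD_eq_getElem l _ hi⟩

end Lemmas

section Main
variable {T : Type}

/-- the induction statement for `PhiAux` traces, relative to ambient `(X, As)` -/
def TraceStmt (step : T → T → Prop) (X : List (Name × Ty T)) (As : List (Proc T))
    (fuel : ℕ) : Prop :=
  ∀ (X' : List (Name × Ty T)) (As' : List (Proc T)) (f : ℕ → ℕ),
    (∀ y ∈ namesOf X', y ∈ namesOf X) →
    (∀ i, i < As'.length → f i < As.length ∧ As'.getD i .nil = As.getD (f i) .nil) →
    ∀ (xs : List (Name × T)) (A : Proc T),
      IsTrace (PhiAux step fuel X' As') (xs.map Sum.inl ++ [Sum.inr A]) →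
      ∃ i, i < As'.length ∧ As'.getD i .nil = A ∧ ∀ xt ∈ xs, NameTied X As xt.1 (f i)

lemma subcall_helper (step : T → T → Prop) (X : List (Name × Ty T)) (As : List (Proc T))
    (fuel : ℕ) (IH : TraceStmt step X As fuel)
    (X' : List (Name × Ty T)) (As' : List (Proc T)) (f : ℕ → ℕ)
    (hn : ∀ y ∈ namesOf X', y ∈ namesOf X)
    (hf : ∀ i, i < As'.length → f i < As.length ∧ As'.getD i .nil = As.getD (f i) .nil)
    (L : List ℕ) (hL : ∀ k ∈ L, k < As'.length)
    (X'' : List (Name × Ty T)) (hn'' : ∀ y ∈ namesOf X'', y ∈ namesOf X')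
    (ys : List (Name × T)) (A : Proc T)
    (ht : IsTrace (PhiAux step fuel X'' (L.map (fun i => As'.getD i .nil)))
      (ys.map Sum.inl ++ [Sum.inr A])) :
    ∃ k, k ∈ L ∧ As'.getD k .nil = A ∧ ∀ xt ∈ ys, NameTied X As xt.1 (f k) := by
  have hg : ∀ i', i' < (L.map (fun i => As'.getD i .nil)).length →
      f (L.getD i' 0) < As.length ∧
      (L.map (fun i => As'.getD i .nil)).getD i' .nil = As.getD (f (L.getD i' 0)) .nil := by
    intro i' hi'
    rw [List.length_map] at hi'
    have hkmem : L[i'] ∈ L := List.getElem_mem hi'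
    have hk : L[i'] < As'.length := hL _ hkmem
    have hgd : L.getD i' 0 = L[i'] := List.getD_eq_getElem L 0 hi'
    have hmgd : (L.map (fun i => As'.getD i .nil)).getD i' .nil = As'.getD L[i'] .nil := by
      rw [List.getD_eq_getElem _ _ (by simpa using hi'), List.getElem_map]
    rw [hgd, hmgd]
    exact hf _ hk
  obtain ⟨i', hi', hA, hty⟩ :=
    IH X'' (L.map (fun i => As'.getD i .nil)) (fun i' => f (L.getD i' 0))
      (fun y hy => hn y (hn'' y hy)) hg ys A ht
  rw [List.length_map] at hi'
  have hgd : L.getD i' 0 = L[i'] := List.getD_eq_getElem L 0 hi'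
  have hmgd : (L.map (fun i => As'.getD i .nil)).getD i' .nil = As'.getD L[i'] .nil := by
    rw [List.getD_eq_getElem _ _ (by simpa using hi'), List.getElem_map]
  refine ⟨L[i'], List.getElem_mem hi', ?_, ?_⟩
  · rw [← hmgd]; exact hA
  · intro xt hxt
    have := hty xt hxt
    rwa [hgd] at this

lemma phiAux_trace (step : T → T → Prop) (X : List (Name × Ty T)) (As : List (Proc T))
    (fuel : ℕ) : TraceStmt step X As fuel := by
  induction fuel with
  | zero =>
    intro X' As' f hn hf xs A ht
    simp only [PhiAux] at ht
    obtain ⟨rfl, hA⟩ := trace_leaves (L := Empty) As' xs A ht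
    obtain ⟨i, hi, hgd⟩ := exists_getD_of_mem hA
    exact ⟨i, hi, hgd, by simp⟩
  | succ fuel IH =>
    intro X' As' f hn hf xs A ht
    by_cases hE : X'.isEmpty
    · rw [PhiAux, if_pos hE] at ht
      obtain ⟨rfl, hA⟩ := trace_leaves (L := Empty) As' xs A ht
      obtain ⟨i, hi, hgd⟩ := exists_getD_of_mem hA
      exact ⟨i, hi, hgd, by simp⟩
    · rw [phiAux_succ step fuel X' As' hE] at ht
      obtain ⟨s, ⟨t, htmem, hsub⟩, hpath⟩ := ht
      rcases List.mem_append.1 htmem with hleft | hright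
      · -- t is one of the minT trees
        obtain ⟨xτ, hxτ, rfl⟩ := List.mem_map.1 hleft
        have hLx : ∀ k ∈ IxD X' As' xτ, k < As'.length := by
          intro k hk
          unfold IxD at hk
          exact List.mem_range.1 (List.mem_filter.1 hk).1
        have hTx : ∀ k ∈ IxD X' As' xτ, NameTied X' As' xτ.1 k := by
          intro k hk
          unfold IxD at hk
          simpa using (List.mem_filter.1 hk).2
        have hnY : ∀ y ∈ namesOf (YxD step X' As' xτ), y ∈ namesOf X' := by
          unfold YxD; exact namesOf_filter_subset _
        rcases subtree_node_cases hsub with rfl | ⟨c, hc, hsub'⟩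
        · rcases rootPath_node_cases hpath with hp | ⟨c, hc, p', hpeq, hp'⟩
          · cases xs <;> simp_all
          · cases xs with
            | nil => simp at hpeq
            | cons xt xs' =>
              simp only [List.map_cons, List.cons_append, List.cons.injEq] at hpeq
              obtain ⟨hxt, hp'eq⟩ := hpeq
              have htr : IsTrace (PhiAux step fuel (YxD step X' As' xτ)
                  ((IxD X' As' xτ).map (fun i => As'.getD i .nil)))
                  (xs'.map Sum.inl ++ [Sum.inr A]) :=
                ⟨c, ⟨c, hc, Subtree.refl c⟩, hp'eq ▸ hp'⟩
              obtain ⟨k, hkmem, hkA, hkty⟩ :=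
                subcall_helper step X As fuel IH X' As' f hn hf _ hLx _ hnY xs' A htr
              refine ⟨k, hLx k hkmem, hkA, ?_⟩
              intro yt hyt
              rcases List.mem_cons.1 hyt with rfl | hyt'
              · have h1 : yt.1 = xτ.1 := by
                  have := congrArg (fun z => match z with | Sum.inl q => q.1 | Sum.inr _ => 0) hxt
                  simpa using this
                rw [h1]
                exact nameTied_lift hn hf (hTx k hkmem)
              · exact hkty yt hyt'
        · have htr : IsTrace (PhiAux step fuel (YxD step X' As' xτ)
              ((IxD X' As' xτ).map (fun i => As'.getD i .nil)))
              (xs.map Sum.inl ++ [Sum.inr A]) :=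
            ⟨s, ⟨c, hc, hsub'⟩, hpath⟩
          obtain ⟨k, hkmem, hkA, hkty⟩ :=
            subcall_helper step X As fuel IH X' As' f hn hf _ hLx _ hnY xs A htr
          exact ⟨k, hLx k hkmem, hkA, hkty⟩
      · -- t is in the Z/R part
        have hLR : ∀ k ∈ RD step X' As', k < As'.length := by
          intro k hk
          unfold RD at hk
          exact List.mem_range.1 (List.mem_filter.1 hk).1
        have hnZ : ∀ y ∈ namesOf (ZD step X' As'), y ∈ namesOf X' := by
          unfold ZD; exact namesOf_filter_subset _
        have htr : IsTrace (PhiAux step fuel (ZD step X' As')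
            ((RD step X' As').map (fun i => As'.getD i .nil)))
            (xs.map Sum.inl ++ [Sum.inr A]) :=
          ⟨s, ⟨t, hright, hsub⟩, hpath⟩
        obtain ⟨k, hkmem, hkA, hkty⟩ :=
          subcall_helper step X As fuel IH X' As' f hn hf _ hLR _ hnZ xs A htr
        exact ⟨k, hLR k hkmem, hkA, hkty⟩

end Main

/-- Lemma 3.6: every name on a trace of `Φ_𝒯(P)` ending at a
leaf `A_j` is tied to `A_j` in `P`. -/
theorem phi_trace_tied {T : Type} [Fintype T] (step : T → T → Prop)
    (hT : IsForestRel step)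
    (X : List (Name × Ty T)) (As : List (Proc T))
    (hNF : NormalForm (nuList X (parList As)))
    (hc : TCompat (blt step) (nuList X (parList As)))
    (xs : List (Name × T)) (A : Proc T)
    (ht : IsTrace (Phi step X As) (xs.map Sum.inl ++ [Sum.inr A])) :
    ∃ j, j < As.length ∧ As.getD j .nil = A ∧
      ∀ xt ∈ xs, NameTied X As xt.1 j := by
  obtain ⟨j, hj, hA, hty⟩ :=
    phiAux_trace step X As X.length X As id (fun y hy => hy)
      (fun i hi => ⟨hi, rfl⟩) xs A ht
  exact ⟨j, hj, hA, hty⟩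

end PiCalc
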